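/- arXiv:2404.11325 — 5 statements merged into one kernel-verified Lean document; each statement's English description precedes it below -/
import Mathlib

section
/- Fix n, k ∈ ℕ with k ≥ 1 and δ ∈ (0, 1/2^{k+3}), and let p be a probability distribution on 𝔽₂^k that is a δ-Santha-Vazirani source. Then there exist a finite probability space with distribution ρ and a function G from ((𝔽₂ⁿ × 𝔽₂)^k × Ω) to (𝔽₂ⁿ × 𝔽₂)^k, both depending only on n, k, p, δ (and not on the secret), such that for every sk ∈ 𝔽₂ⁿ, the pushforward under G of the product of k independent samples from the LPN distribution LPN_{n, 2^{k+2}δ}(sk) together with an independent sample from ρ is exactly the batch LPN distribution LPN_{n,p}(sk). -/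
/-- A probability mass function on a finite type: nonnegative, summing to 1. -/
def IsProbDist {X : Type*} [Fintype X] (p : X → ℝ) : Prop :=
  (∀ x, 0 ≤ p x) ∧ ∑ x, p x = 1

/-- Bernoulli distribution on `𝔽₂`, taking value `1` with probability `α`. -/
noncomputable def bern (α : ℝ) : ZMod 2 → ℝ := fun z => if z = 1 then α else 1 - α

/-- Pushforward of a mass function on a finite type along a map. -/
noncomputable def pushforward {X Y : Type*} [Fintype X] [DecidableEq Y]
    (f : X → Y) (p : X → ℝ) : Y → ℝ :=
  fun y => ∑ x ∈ Finset.univ.filter (fun x => f x = y), p x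

/-- The LPN distribution `LPN_{n,δ}(sk)`: the law of `(u, ⟨u,sk⟩ + e)` with `u`
uniform on `𝔽₂ⁿ` and `e ∼ Ber(1/2 − δ)` independent. -/
noncomputable def lpn (n : ℕ) (δ : ℝ) (sk : Fin n → ZMod 2) :
    ((Fin n → ZMod 2) × ZMod 2) → ℝ :=
  fun s => (1 / 2 ^ n) * bern (1 / 2 - δ) (s.2 - dotProduct s.1 sk)

/-- The batch LPN distribution `LPN_{n,p}(sk)`: the law of `(uⁱ, ⟨uⁱ,sk⟩ + eⁱ)_{i=1}^k`
with the `uⁱ` i.i.d. uniform on `𝔽₂ⁿ` and `(e¹,…,e^k) ∼ p` independent of them. -/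
noncomputable def batchLPN (n k : ℕ) (p : (Fin k → ZMod 2) → ℝ) (sk : Fin n → ZMod 2) :
    (Fin k → (Fin n → ZMod 2) × ZMod 2) → ℝ :=
  fun s => (1 / 2 ^ (n * k)) * p (fun i => (s i).2 - dotProduct (s i).1 sk)

/-- `p` is a `δ`-Santha–Vazirani source: for every `i` and every conditioning of the
preceding bits, the conditional probability that the `i`-th bit is `1` lies in
`[1/2 − δ, 1/2 + δ]` (stated multiplicatively to avoid division by zero). -/
def IsSVSource {k : ℕ} (δ : ℝ) (p : (Fin k → ZMod 2) → ℝ) : Prop :=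
  ∀ (i : Fin k) (x : Fin k → ZMod 2),
    (1 / 2 - δ) * (∑ z ∈ Finset.univ.filter (fun z : Fin k → ZMod 2 => ∀ j, j < i → z j = x j), p z)
      ≤ (∑ z ∈ Finset.univ.filter
          (fun z : Fin k → ZMod 2 => z i = 1 ∧ ∀ j, j < i → z j = x j), p z) ∧
    (∑ z ∈ Finset.univ.filter
          (fun z : Fin k → ZMod 2 => z i = 1 ∧ ∀ j, j < i → z j = x j), p z)
      ≤ (1 / 2 + δ) *
        (∑ z ∈ Finset.univ.filter (fun z : Fin k → ZMod 2 => ∀ j, j < i → z j = x j), p z)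

namespace LPNaux
open Finset

/-! ### The sign character on `ZMod 2` and Fourier analysis on `(ZMod 2)^k` -/

noncomputable def sgn (z : ZMod 2) : ℝ := if z = 1 then -1 else 1

lemma sgn_zero : sgn 0 = 1 := by norm_num [sgn]

lemma zmod2_cases (z : ZMod 2) : z = 0 ∨ z = 1 := by revert z; decide

lemma zmod2_zero_ne_one : (0 : ZMod 2) ≠ 1 := by decide

lemma zmod2_one_add_one : (1 : ZMod 2) + 1 = 0 := by decide

lemma zmod2_two_ne_one : (2 : ZMod 2) ≠ 1 := by decide

lemma sgn_add (a b : ZMod 2) : sgn (a + b) = sgn a * sgn b := by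
  rcases zmod2_cases a with rfl | rfl <;> rcases zmod2_cases b with rfl | rfl <;>
    norm_num [sgn, zmod2_zero_ne_one, zmod2_one_add_one, zmod2_zero_ne_one.symm, zmod2_two_ne_one]

lemma sgn_sum {ι : Type*} (s : Finset ι) (f : ι → ZMod 2) :
    sgn (∑ i ∈ s, f i) = ∏ i ∈ s, sgn (f i) := by
  classical
  induction s using Finset.cons_induction with
  | empty => simp [sgn_zero]
  | cons a s ha ih => rw [Finset.sum_cons, Finset.prod_cons, sgn_add, ih]

lemma abs_sgn (z : ZMod 2) : |sgn z| = 1 := by rcases zmod2_cases z with rfl | rfl <;> norm_num [sgn, zmod2_zero_ne_one]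

lemma univ_zmod2 : (Finset.univ : Finset (ZMod 2)) = {0, 1} := by decide

lemma zmod2_ne_zero {z : ZMod 2} (h : z ≠ 0) : z = 1 := by
  fin_cases z
  · exact absurd rfl h
  · rfl

lemma sum_sgn : ∑ z : ZMod 2, sgn z = 0 := by
  rw [univ_zmod2, Finset.sum_pair (by decide)]
  norm_num [sgn, sgn_zero]

variable {k : ℕ}

noncomputable def chi (S x : Fin k → ZMod 2) : ℝ := sgn (∑ j, S j * x j)

lemma chi_eq_prod (S x : Fin k → ZMod 2) : chi S x = ∏ j, sgn (S j * x j) := by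
  rw [chi, sgn_sum]

lemma abs_chi (S x : Fin k → ZMod 2) : |chi S x| = 1 := abs_sgn _

lemma chi_add_right (S x y : Fin k → ZMod 2) :
    chi S (x + y) = chi S x * chi S y := by
  unfold chi
  rw [← sgn_add, ← Finset.sum_add_distrib]
  congr 1; apply Finset.sum_congr rfl; intro j _
  simp [Pi.add_apply, mul_add]

lemma chi_zero_right (S : Fin k → ZMod 2) : chi S 0 = 1 := by
  simp [chi, sgn_zero]

lemma chi_zero_left (x : Fin k → ZMod 2) : chi 0 x = 1 := by
  simp [chi, sgn_zero]

lemma sum_pi_prod (g : Fin k → ZMod 2 → ℝ) :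
    ∑ x : Fin k → ZMod 2, ∏ j, g j (x j) = ∏ j, ∑ z : ZMod 2, g j z := by
  rw [Finset.prod_univ_sum, Fintype.piFinset_univ]

lemma sum_bern (α : ℝ) : ∑ z : ZMod 2, bern α z = 1 := by
  rw [univ_zmod2, Finset.sum_pair (by decide)]
  norm_num [bern]

lemma sum_bern_sgn (α : ℝ) : ∑ z : ZMod 2, bern α z * sgn z = 1 - 2 * α := by
  rw [univ_zmod2, Finset.sum_pair (by decide)]
  norm_num [bern, sgn]
  ring

/-- product Bernoulli mass function -/
noncomputable def B (α : ℝ) (e : Fin k → ZMod 2) : ℝ := ∏ j, bern α (e j)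

lemma sum_B (α : ℝ) : ∑ e : Fin k → ZMod 2, B α e = 1 := by
  rw [show (∑ e : Fin k → ZMod 2, B α e) = ∑ e : Fin k → ZMod 2, ∏ j, bern α (e j) from rfl,
    sum_pi_prod]
  simp [sum_bern]

lemma sum_B_sgn (α : ℝ) (i₀ : Fin k) :
    ∑ e : Fin k → ZMod 2, B α e * sgn (e i₀) = 1 - 2 * α := by
  have h : ∀ e : Fin k → ZMod 2, B α e * sgn (e i₀)
      = ∏ j, (bern α (e j) * (if j = i₀ then sgn (e j) else 1)) := by
    intro e
    rw [Finset.prod_mul_distrib]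
    congr 1
    rw [Finset.prod_ite_eq' Finset.univ i₀ (fun j => sgn (e j))]
    simp
  simp_rw [h]
  rw [sum_pi_prod (fun j z => bern α z * if j = i₀ then sgn z else 1)]
  have : ∀ j : Fin k, (∑ z : ZMod 2, bern α z * (if j = i₀ then sgn z else 1))
      = if j = i₀ then 1 - 2 * α else 1 := by
    intro j
    by_cases hj : j = i₀ <;> simp [hj, sum_bern_sgn, sum_bern]
  simp_rw [this]
  rw [Finset.prod_ite_eq' Finset.univ i₀ (fun _ => (1 : ℝ) - 2 * α)]
  simp

lemma sum_chi_right {S : Fin k → ZMod 2} (hS : S ≠ 0) :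
    ∑ c : Fin k → ZMod 2, chi S c = 0 := by
  simp_rw [chi_eq_prod]
  rw [sum_pi_prod (fun j z => sgn (S j * z))]
  obtain ⟨j, hj⟩ : ∃ j, S j ≠ 0 := by
    by_contra h; push_neg at h; exact hS (funext h)
  apply Finset.prod_eq_zero (Finset.mem_univ j)
  rw [zmod2_ne_zero hj]
  simpa using sum_sgn

lemma sum_sgn_mul (y : ZMod 2) :
    ∑ z : ZMod 2, sgn (z * y) = if y = 0 then (2 : ℝ) else 0 := by
  rw [univ_zmod2, Finset.sum_pair (by decide)]
  rcases zmod2_cases y with rfl | rfl <;> norm_num [sgn, zmod2_zero_ne_one, zmod2_zero_ne_one.symm]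

lemma sum_chi_left (y : Fin k → ZMod 2) :
    ∑ S : Fin k → ZMod 2, chi S y = if y = 0 then (2 : ℝ) ^ k else 0 := by
  simp_rw [chi_eq_prod]
  rw [sum_pi_prod (fun j z => sgn (z * y j))]
  simp_rw [sum_sgn_mul]
  by_cases hy : y = 0
  · simp [hy]
  · rw [if_neg hy]
    obtain ⟨j, hj⟩ : ∃ j, y j ≠ 0 := by
      by_contra h; push_neg at h; exact hy (funext h)
    exact Finset.prod_eq_zero (Finset.mem_univ j) (by simp [hj])

/-! ### Fourier coefficients -/

noncomputable def phat (p : (Fin k → ZMod 2) → ℝ) (S : Fin k → ZMod 2) : ℝ :=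
  ∑ x, p x * chi S x

lemma phat_zero {p : (Fin k → ZMod 2) → ℝ} (hp : ∑ x, p x = 1) : phat p 0 = 1 := by
  simp only [phat, chi_zero_left, mul_one]; exact hp

lemma pi_add_self (x : Fin k → ZMod 2) : x + x = 0 :=
  funext fun j => CharTwo.add_self_eq_zero (x j)

lemma pi_add_eq_zero {x y : Fin k → ZMod 2} : x + y = 0 ↔ x = y := by
  constructor
  · intro h
    have := congrArg (· + y) h
    simpa [add_assoc, pi_add_self, zero_add] using this
  · rintro rfl; exact pi_add_self x

/-- Fourier inversion. -/
lemma sum_phat_chi (p : (Fin k → ZMod 2) → ℝ) (f : Fin k → ZMod 2) :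
    ∑ S, phat p S * chi S f = 2 ^ k * p f := by
  simp_rw [phat, Finset.sum_mul, mul_assoc, ← chi_add_right]
  rw [Finset.sum_comm]
  have : ∀ x : Fin k → ZMod 2, ∑ S : Fin k → ZMod 2, p x * chi S (x + f)
      = p x * if x = f then (2:ℝ)^k else 0 := by
    intro x
    rw [← Finset.mul_sum, sum_chi_left (x + f)]
    congr 1
    simp [pi_add_eq_zero]
  simp_rw [this]
  simp [Finset.sum_ite_eq' Finset.univ f, mul_comm]

/-! ### The Santha–Vazirani Fourier bound -/

lemma abs_phat_le {δ : ℝ} {p : (Fin k → ZMod 2) → ℝ}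
    (hp : IsProbDist p) (hSV : IsSVSource δ p)
    {S : Fin k → ZMod 2} (hS : S ≠ 0) : |phat p S| ≤ 2 * δ := by
  classical
  -- the largest coordinate where S is 1
  have hTne : (Finset.univ.filter (fun j => S j = 1)).Nonempty := by
    obtain ⟨j, hj⟩ : ∃ j, S j ≠ 0 := by
      by_contra h; push_neg at h; exact hS (funext h)
    exact ⟨j, by simp [zmod2_ne_zero hj]⟩
  set i : Fin k := (Finset.univ.filter (fun j => S j = 1)).max' hTne with hi
  have hSi : S i = 1 := by
    have := Finset.max'_mem _ hTne
    simpa using (Finset.mem_filter.mp this).2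
  have hmax : ∀ j, S j = 1 → j ≤ i := by
    intro j hj
    exact Finset.le_max' _ j (by simp [hj])
  -- truncation map
  set π : (Fin k → ZMod 2) → (Fin k → ZMod 2) :=
    fun x j => if j < i then x j else 0 with hπ
  -- modified character
  set S' : Fin k → ZMod 2 := fun j => if j = i then 0 else S j with hS'
  -- fiberwise decomposition
  have hdecomp : phat p S
      = ∑ y : Fin k → ZMod 2, ∑ x ∈ Finset.univ.filter (fun x => π x = y), p x * chi S x := by
    rw [phat, Finset.sum_fiberwise Finset.univ π (fun x => p x * chi S x)]
  rw [hdecomp]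
  have key : ∀ y : Fin k → ZMod 2,
      |∑ x ∈ Finset.univ.filter (fun x => π x = y), p x * chi S x|
        ≤ 2 * δ * ∑ x ∈ Finset.univ.filter (fun x => π x = y), p x := by
    intro y
    by_cases hy : ∀ j, ¬ j < i → y j = 0
    · -- the fiber is the SV conditioning set
      have hfib : ∀ x : Fin k → ZMod 2, π x = y ↔ ∀ j, j < i → x j = y j := by
        intro x
        constructor
        · intro h j hj
          have := congrFun h j
          simpa [hπ, hj] using this
        · intro h
          funext j
          by_cases hj : j < i
          · simpa [hπ, hj] using h j hj
          · simp [hπ, hj, (hy j hj).symm]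
      -- chi splits on the fiber
      have hchi : ∀ x : Fin k → ZMod 2, π x = y →
          chi S x = sgn (x i) * chi S' y := by
        intro x hx
        have harg : (∑ j, S j * x j) = x i + ∑ j, S' j * y j := by
          have hterm : ∀ j : Fin k, S j * x j
              = (if j = i then x i else 0) + S' j * y j := by
            intro j
            by_cases hj : j = i
            · subst hj; simp [hS', hSi]
            · simp only [if_neg hj, hS', if_neg hj, zero_add]
              by_cases hSj : S j = 0
              · simp [hSj]
              · have h1 : S j = 1 := zmod2_ne_zero hSj
                have hji : j < i := lt_of_le_of_ne (hmax j h1) hj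
                have := (hfib x).mp hx j hji
                rw [this]
          rw [Finset.sum_congr rfl (fun j _ => hterm j), Finset.sum_add_distrib,
            Finset.sum_ite_eq' Finset.univ i (fun _ => x i)]
          simp
        rw [chi, harg, sgn_add, chi]
      -- rewrite the inner sum
      have hsum : ∑ x ∈ Finset.univ.filter (fun x => π x = y), p x * chi S x
          = chi S' y * ∑ x ∈ Finset.univ.filter (fun x => π x = y), p x * sgn (x i) := by
        rw [Finset.mul_sum]
        apply Finset.sum_congr rfl
        intro x hx
        rw [hchi x (Finset.mem_filter.mp hx).2]
        ring
      rw [hsum, abs_mul, abs_chi, one_mul]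
      -- masses
      set M : ℝ := ∑ x ∈ Finset.univ.filter (fun x => π x = y), p x with hM
      set M1 : ℝ := ∑ x ∈ Finset.univ.filter (fun x => π x = y ∧ x i = 1), p x with hM1
      have hsgn : ∑ x ∈ Finset.univ.filter (fun x => π x = y), p x * sgn (x i)
          = M - 2 * M1 := by
        have : ∀ x : Fin k → ZMod 2, p x * sgn (x i)
            = p x - 2 * (if x i = 1 then p x else 0) := by
          intro x
          by_cases h : x i = 1 <;> simp [sgn, h] <;> ring
        rw [Finset.sum_congr rfl (fun x _ => this x), Finset.sum_sub_distrib, ← hM]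
        rw [← Finset.mul_sum, Finset.sum_filter, hM1, Finset.sum_filter]
        congr 2
        apply Finset.sum_congr rfl
        intro x _
        by_cases h1 : π x = y <;> by_cases h2 : x i = 1 <;> simp [h1, h2]
      rw [hsgn]
      -- SV bounds
      obtain ⟨hlow, hhigh⟩ := hSV i y
      have hMeq : (∑ z ∈ Finset.univ.filter
          (fun z : Fin k → ZMod 2 => ∀ j, j < i → z j = y j), p z) = M := by
        rw [hM]
        apply Finset.sum_congr _ (fun _ _ => rfl)
        apply Finset.filter_congr
        intro x _
        simp [hfib x]
      have hM1eq : (∑ z ∈ Finset.univ.filter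
          (fun z : Fin k → ZMod 2 => z i = 1 ∧ ∀ j, j < i → z j = y j), p z) = M1 := by
        rw [hM1]
        apply Finset.sum_congr _ (fun _ _ => rfl)
        apply Finset.filter_congr
        intro x _
        simp only [hfib x]
        tauto
      rw [hMeq] at hlow hhigh
      rw [hM1eq] at hlow hhigh
      rw [abs_le]
      constructor <;> nlinarith [hlow, hhigh]
    · -- the fiber is empty
      push_neg at hy
      obtain ⟨j, hj1, hj2⟩ := hy
      have : Finset.univ.filter (fun x : Fin k → ZMod 2 => π x = y) = ∅ := by
        apply Finset.filter_false_of_mem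
        intro x _
        intro h
        apply hj2
        have h0 : (if j < i then x j else 0) = y j := congrFun h j
        rw [if_neg (not_lt.mpr hj1)] at h0
        exact h0.symm
      simp [this]
  calc |∑ y : Fin k → ZMod 2, ∑ x ∈ Finset.univ.filter (fun x => π x = y), p x * chi S x|
      ≤ ∑ y : Fin k → ZMod 2, |∑ x ∈ Finset.univ.filter (fun x => π x = y), p x * chi S x| :=
        Finset.abs_sum_le_sum_abs _ _
    _ ≤ ∑ y : Fin k → ZMod 2, 2 * δ * ∑ x ∈ Finset.univ.filter (fun x => π x = y), p x :=
        Finset.sum_le_sum (fun y _ => key y)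
    _ = 2 * δ := by
        rw [← Finset.mul_sum, Finset.sum_fiberwise Finset.univ π p, hp.2, mul_one]

/-! ### The coordinate-replacing linear involution -/

section Lv

variable {V : Type*} [AddCommGroup V] [Module (ZMod 2) V]

lemma V_add_self (v : V) : v + v = 0 := by
  rw [← two_smul (ZMod 2) v, show (2 : ZMod 2) = 0 from rfl, zero_smul]

/-- Replace the `i₀`-th coordinate of `u` by `∑ i, S i • u i`. -/
noncomputable def Lv (S : Fin k → ZMod 2) (i₀ : Fin k) (u : Fin k → V) : Fin k → V :=
  fun j => if j = i₀ then ∑ i, S i • u i else u j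

lemma Lv_invol {S : Fin k → ZMod 2} {i₀ : Fin k} (hS : S i₀ = 1) (u : Fin k → V) :
    Lv S i₀ (Lv S i₀ u) = u := by
  funext j
  by_cases hj : j = i₀
  · subst hj
    show (if j = j then ∑ i, S i • (Lv S j u i) else _) = u j
    rw [if_pos rfl]
    have hsplit : ∀ v : Fin k → V,
        ∑ i, S i • v i = S j • v j + ∑ i ∈ Finset.univ.erase j, S i • v i :=
      fun v => (Finset.add_sum_erase _ _ (Finset.mem_univ j)).symm
    rw [hsplit (fun i => Lv S j u i)]
    have herase : ∑ i ∈ Finset.univ.erase j, S i • Lv S j u i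
        = ∑ i ∈ Finset.univ.erase j, S i • u i := by
      apply Finset.sum_congr rfl
      intro i hi
      have : i ≠ j := (Finset.mem_erase.mp hi).1
      rw [show Lv S j u i = u i from if_neg this]
    rw [herase]
    have hLjj : Lv S j u j = ∑ i, S i • u i := if_pos rfl
    rw [hLjj, hS, one_smul, hsplit u, hS, one_smul, add_assoc, V_add_self, add_zero]
  · show (if j = i₀ then _ else Lv S i₀ u j) = u j
    rw [if_neg hj]
    exact if_neg hj

lemma Lv_add (S : Fin k → ZMod 2) (i₀ : Fin k) (u v : Fin k → V) :
    Lv S i₀ (u + v) = Lv S i₀ u + Lv S i₀ v := by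
  funext j
  by_cases hj : j = i₀ <;>
    simp [Lv, hj, smul_add, Finset.sum_add_distrib]

lemma chi_Lv {S : Fin k → ZMod 2} {i₀ : Fin k} (hS : S i₀ = 1) (c : Fin k → ZMod 2) :
    chi S (Lv S i₀ c) = sgn (c i₀) := by
  unfold chi
  congr 1
  have hsplit : ∀ v : Fin k → ZMod 2,
      ∑ i, S i * v i = S i₀ * v i₀ + ∑ i ∈ Finset.univ.erase i₀, S i * v i :=
    fun v => (Finset.add_sum_erase _ _ (Finset.mem_univ i₀)).symm
  rw [hsplit (fun i => Lv S i₀ c i)]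
  have herase : ∑ i ∈ Finset.univ.erase i₀, S i * Lv S i₀ c i
      = ∑ i ∈ Finset.univ.erase i₀, S i * c i := by
    apply Finset.sum_congr rfl
    intro i hi
    rw [show Lv S i₀ c i = c i from if_neg (Finset.mem_erase.mp hi).1]
  rw [herase]
  have hLi : Lv S i₀ c i₀ = ∑ i, S i * c i := by
    rw [show Lv S i₀ c i₀ = ∑ i, S i • c i from if_pos rfl]
    simp [smul_eq_mul]
  rw [hLi, hS, one_mul, hsplit c, hS, one_mul, add_assoc, CharTwo.add_self_eq_zero, add_zero]

lemma Lv_dot {n : ℕ} (S : Fin k → ZMod 2) (i₀ : Fin k)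
    (t₁ : Fin k → Fin n → ZMod 2) (sk : Fin n → ZMod 2) (j : Fin k) :
    dotProduct (Lv S i₀ t₁ j) sk
      = Lv S i₀ (fun i => dotProduct (t₁ i) sk) j := by
  unfold Lv
  by_cases hj : j = i₀
  · rw [if_pos hj, if_pos hj]
    unfold dotProduct
    simp only [Finset.sum_apply, Pi.smul_apply, smul_eq_mul, Finset.sum_mul]
    rw [Finset.sum_comm]
    apply Finset.sum_congr rfl
    intro i _
    rw [Finset.mul_sum]
    apply Finset.sum_congr rfl
    intro x _
    ring
  · rw [if_neg hj, if_neg hj]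

end Lv

end LPNaux

namespace LPNaux

variable {k : ℕ}

lemma pushforward_precomp_equiv {X X' Y : Type*} [Fintype X] [Fintype X'] [DecidableEq Y]
    (e : X' ≃ X) (f : X → Y) (p : X → ℝ) :
    pushforward (fun x' => f (e x')) (fun x' => p (e x')) = pushforward f p := by
  funext y
  unfold pushforward
  apply Finset.sum_equiv e
  · intro i; simp
  · intro i _; rfl

lemma card_ne_zero_subtype (k : ℕ) :
    Fintype.card {S : Fin k → ZMod 2 // S ≠ 0} = 2 ^ k - 1 := by
  rw [Fintype.card_subtype]
  rw [Finset.filter_ne']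
  rw [Finset.card_erase_of_mem (Finset.mem_univ 0)]
  congr 1
  rw [Finset.card_univ, Fintype.card_fun]
  simp [ZMod.card]

end LPNaux

open LPNaux in
/-- **Robustness of LPN to Santha–Vazirani batch noise.** There is a finite probability
space `Fin m` with distribution `ρ` and a map `G`, both depending only on `n, k, p, δ`
(and not on the secret), such that for every secret `sk`, the pushforward under `G` of
(k independent samples from `LPN_{n, 2^{k+2}δ}(sk)`) × (an independent sample from `ρ`)
is exactly the batch LPN distribution `LPN_{n,p}(sk)`. -/
theorem lpn_robust_to_sv_batch_noise (n k : ℕ) (hk : 1 ≤ k) (δ : ℝ)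
    (hδ0 : 0 < δ) (hδ1 : δ < 1 / 2 ^ (k + 3))
    (p : (Fin k → ZMod 2) → ℝ) (hp : IsProbDist p) (hSV : IsSVSource δ p) :
    ∃ (m : ℕ) (ρ : Fin m → ℝ)
      (G : (Fin k → (Fin n → ZMod 2) × ZMod 2) × Fin m → (Fin k → (Fin n → ZMod 2) × ZMod 2)),
      IsProbDist ρ ∧
      ∀ sk : Fin n → ZMod 2,
        pushforward G (fun x => (∏ i, lpn n (2 ^ (k + 2) * δ) sk (x.1 i)) * ρ x.2)
          = batchLPN n k p sk := by
  classical
  obtain ⟨hp0, hp1⟩ := hp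
  set Δ : ℝ := 2 ^ (k + 2) * δ with hΔ
  have hΔ0 : 0 < Δ := by positivity
  -- each nonzero S has a coordinate equal to 1
  have hidx : ∀ S : {S : Fin k → ZMod 2 // S ≠ 0}, ∃ j, S.1 j = 1 := by
    intro S
    obtain ⟨j, hj⟩ : ∃ j, S.1 j ≠ 0 := by
      by_contra h; push_neg at h; exact S.2 (funext h)
    exact ⟨j, zmod2_ne_zero hj⟩
  let i₀ : {S : Fin k → ZMod 2 // S ≠ 0} → Fin k := fun S => (hidx S).choose
  have hi₀1 : ∀ S : {S : Fin k → ZMod 2 // S ≠ 0}, S.1 (i₀ S) = 1 := fun S => (hidx S).choose_spec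
  -- weights
  set w0 : ℝ := 1 / (2 ^ k - 1) with hw0
  have h2k : (1 : ℝ) ≤ 2 ^ k - 1 := by
    have : (2 : ℝ) ≤ 2 ^ k := by
      calc (2:ℝ) = 2 ^ 1 := (pow_one 2).symm
      _ ≤ 2 ^ k := pow_le_pow_right₀ (by norm_num) hk
    linarith
  -- SV Fourier bound, in convenient form
  have hphat : ∀ S : Fin k → ZMod 2, S ≠ 0 → |phat p S| ≤ 2 * δ :=
    fun S hS => abs_phat_le ⟨hp0, hp1⟩ hSV hS
  -- the mixing distribution
  set ρ' : {S : Fin k → ZMod 2 // S ≠ 0} × (Fin k → ZMod 2) → ℝ :=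
    fun w => (1 / 2 ^ k) * (w0 + 2 * (phat p w.1.1 / (4 * Δ)) * chi w.1.1 w.2) with hρ'
  -- nonnegativity of ρ'
  have hρ'nonneg : ∀ w, 0 ≤ ρ' w := by
    intro w
    have habs : |2 * (phat p w.1.1 / (4 * Δ)) * chi w.1.1 w.2| ≤ δ / Δ := by
      have hb : |phat p w.1.1| ≤ 2 * δ := hphat w.1.1 w.1.2
      have hΔne : Δ ≠ 0 := ne_of_gt hΔ0
      calc |2 * (phat p w.1.1 / (4 * Δ)) * chi w.1.1 w.2|
          = |phat p w.1.1| / (2 * Δ) := by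
            rw [abs_mul, abs_chi, mul_one, abs_mul, abs_div,
              abs_of_nonneg (le_of_lt (by positivity : (0:ℝ) < 4 * Δ)),
              abs_of_nonneg (by norm_num : (0:ℝ) ≤ 2)]
            field_simp
            ring
        _ ≤ (2 * δ) / (2 * Δ) := by
            have h2Δ : (0:ℝ) < 2 * Δ := by linarith
            first
            | exact (div_le_div_right h2Δ).mpr hb
            | exact (div_le_div_iff_of_pos_right h2Δ).mpr hb
            | gcongr
        _ = δ / Δ := by
            rw [mul_div_mul_left _ _ (by norm_num : (2:ℝ) ≠ 0)]
    have hδΔ : δ / Δ ≤ w0 := by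
      rw [hw0, hΔ, div_le_div_iff₀ (by positivity) (by linarith)]
      have h1 : δ * (2 ^ k - 1) ≤ δ * 2 ^ k := by nlinarith [pow_pos (show (0:ℝ) < 2 by norm_num) k]
      have h2 : (2:ℝ) ^ (k+2) = 4 * 2 ^ k := by ring
      nlinarith [pow_pos (show (0:ℝ) < 2 by norm_num) k]
    have := neg_abs_le (2 * (phat p w.1.1 / (4 * Δ)) * chi w.1.1 w.2)
    have hpos : (0:ℝ) < 1 / 2 ^ k := by positivity
    apply mul_nonneg (le_of_lt hpos)
    linarith
  -- card facts
  have hcardc : ((Finset.univ : Finset (Fin k → ZMod 2)).card : ℝ) = 2 ^ k := by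
    rw [Finset.card_univ, Fintype.card_fun]
    simp [ZMod.card]
  have hcardNZ : ((Finset.univ : Finset {S : Fin k → ZMod 2 // S ≠ 0}).card : ℝ)
      = 2 ^ k - 1 := by
    rw [Finset.card_univ, card_ne_zero_subtype k]
    have : (1:ℕ) ≤ 2 ^ k := Nat.one_le_two_pow
    push_cast [this]
    ring
  -- ρ' sums to 1
  have hρ'sum : ∑ w, ρ' w = 1 := by
    rw [Fintype.sum_prod_type]
    have hinner : ∀ S : {S : Fin k → ZMod 2 // S ≠ 0},
        ∑ c : Fin k → ZMod 2, ρ' (S, c) = w0 := by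
      intro S
      simp only [hρ']
      rw [← Finset.mul_sum]
      have : ∑ c : Fin k → ZMod 2, (w0 + 2 * (phat p S.1 / (4 * Δ)) * chi S.1 c)
          = 2 ^ k * w0 := by
        rw [Finset.sum_add_distrib, Finset.sum_const, ← Finset.mul_sum, sum_chi_right S.2]
        rw [nsmul_eq_mul, hcardc]
        ring
      rw [this]
      have h2kpos : (0:ℝ) < 2 ^ k := by positivity
      field_simp
    rw [Finset.sum_congr rfl (fun S _ => hinner S), Finset.sum_const, nsmul_eq_mul, hcardNZ,
      hw0]
    field_simp
  -- the key distributional identity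
  have KEY : ∀ f : Fin k → ZMod 2,
      ∑ w : {S : Fin k → ZMod 2 // S ≠ 0} × (Fin k → ZMod 2),
        ρ' w * B (1/2 - Δ) (Lv w.1.1 (i₀ w.1) (f + w.2)) = p f := by
    intro f
    rw [Fintype.sum_prod_type]
    have hinner : ∀ S : {S : Fin k → ZMod 2 // S ≠ 0},
        ∑ c : Fin k → ZMod 2, ρ' (S, c) * B (1/2 - Δ) (Lv S.1 (i₀ S) (f + c))
          = (1 / 2 ^ k) * (w0 + phat p S.1 * chi S.1 f) := by
      intro S
      -- reindex c := f + Lv S (i₀ S) c'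
      have hbij : Function.Bijective
          (fun c' : Fin k → ZMod 2 => f + Lv S.1 (i₀ S) c') := by
        rw [Function.bijective_iff_has_inverse]
        refine ⟨fun c => Lv S.1 (i₀ S) (f + c), ?_, ?_⟩
        · intro c'
          show Lv S.1 (i₀ S) (f + (f + Lv S.1 (i₀ S) c')) = c'
          rw [← add_assoc, pi_add_self, zero_add, Lv_invol (hi₀1 S)]
        · intro c
          show f + Lv S.1 (i₀ S) (Lv S.1 (i₀ S) (f + c)) = c
          rw [Lv_invol (hi₀1 S), ← add_assoc, pi_add_self, zero_add]
      rw [← Function.Bijective.sum_comp hbij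
        (fun c => ρ' (S, c) * B (1/2 - Δ) (Lv S.1 (i₀ S) (f + c)))]
      have hterm : ∀ c' : Fin k → ZMod 2,
          ρ' (S, f + Lv S.1 (i₀ S) c')
            * B (1/2 - Δ) (Lv S.1 (i₀ S) (f + (f + Lv S.1 (i₀ S) c')))
          = (1 / 2 ^ k) * (w0 + 2 * (phat p S.1 / (4 * Δ)) * chi S.1 f * sgn (c' (i₀ S)))
            * B (1/2 - Δ) c' := by
        intro c'
        congr 1
        · simp only [hρ']
          rw [chi_add_right, chi_Lv (hi₀1 S)]
          ring
        · rw [← add_assoc, pi_add_self, zero_add, Lv_invol (hi₀1 S)]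
      rw [Finset.sum_congr rfl (fun c' _ => hterm c')]
      simp_rw [mul_assoc, ← Finset.mul_sum]
      simp_rw [add_mul, Finset.sum_add_distrib, ← Finset.mul_sum]
      rw [sum_B]
      simp_rw [mul_assoc, ← Finset.mul_sum]
      have hBs : ∑ c' : Fin k → ZMod 2, B (1/2 - Δ) c' * sgn (c' (i₀ S)) = 2 * Δ := by
        rw [sum_B_sgn]; ring
      have hsum2 : ∑ x : Fin k → ZMod 2, sgn (x (i₀ S)) * B (1/2 - Δ) x = 2 * Δ := by
        rw [← hBs]; apply Finset.sum_congr rfl; intros; ring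
      rw [hsum2]
      have hΔne : Δ ≠ 0 := ne_of_gt hΔ0
      field_simp
      ring
    rw [Finset.sum_congr rfl (fun S _ => hinner S)]
    -- sum over nonzero S
    have hsubt : (∑ S : {S : Fin k → ZMod 2 // S ≠ 0},
        (1 / 2 ^ k : ℝ) * (w0 + phat p S.1 * chi S.1 f))
        = ∑ S ∈ Finset.univ.erase (0 : Fin k → ZMod 2),
            (1 / 2 ^ k : ℝ) * (w0 + phat p S * chi S f) :=
      (Finset.sum_subtype (p := fun S : Fin k → ZMod 2 => S ≠ 0)
        (s := Finset.univ.erase (0 : Fin k → ZMod 2))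
        (f := fun S => (1 / 2 ^ k : ℝ) * (w0 + phat p S * chi S f))
        (fun x => by simp)).symm
    rw [hsubt]
    have herase : ∀ g : (Fin k → ZMod 2) → ℝ,
        ∑ S ∈ Finset.univ.erase (0 : Fin k → ZMod 2), g S = (∑ S, g S) - g 0 := by
      intro g
      have := Finset.add_sum_erase Finset.univ g (Finset.mem_univ (0 : Fin k → ZMod 2))
      linarith
    rw [herase]
    have hsum_all : ∑ S : Fin k → ZMod 2, (1 / 2 ^ k : ℝ) * (w0 + phat p S * chi S f)
        = (1 / 2 ^ k) * (2 ^ k * w0 + 2 ^ k * p f) := by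
      rw [← Finset.mul_sum]
      congr 1
      rw [Finset.sum_add_distrib, Finset.sum_const, nsmul_eq_mul, hcardc, sum_phat_chi p f]
    rw [hsum_all, phat_zero hp1, chi_zero_left]
    have h2kpos : (0:ℝ) < 2 ^ k := by positivity
    have hne : (2:ℝ) ^ k - 1 ≠ 0 := by linarith
    rw [hw0]
    field_simp
    ring
  -- the transformation
  let i0w : {S : Fin k → ZMod 2 // S ≠ 0} × (Fin k → ZMod 2) → Fin k := fun w => i₀ w.1
  let G' : (Fin k → (Fin n → ZMod 2) × ZMod 2)
      × ({S : Fin k → ZMod 2 // S ≠ 0} × (Fin k → ZMod 2))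
      → (Fin k → (Fin n → ZMod 2) × ZMod 2) :=
    fun x j => (Lv x.2.1.1 (i0w x.2) (fun i => (x.1 i).1) j,
                Lv x.2.1.1 (i0w x.2) (fun i => (x.1 i).2) j + x.2.2 j)
  let Ginv : (Fin k → (Fin n → ZMod 2) × ZMod 2)
      → ({S : Fin k → ZMod 2 // S ≠ 0} × (Fin k → ZMod 2))
      → (Fin k → (Fin n → ZMod 2) × ZMod 2) :=
    fun t w j => (Lv w.1.1 (i0w w) (fun i => (t i).1) j,
                  Lv w.1.1 (i0w w) (fun i => (t i).2 + w.2 i) j)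
  have hGG : ∀ s w, Ginv (G' (s, w)) w = s := by
    intro s w
    funext j
    have h1 : (fun i => (G' (s, w) i).1) = Lv w.1.1 (i0w w) (fun i => (s i).1) := rfl
    have h2 : (fun i => (G' (s, w) i).2 + w.2 i)
        = Lv w.1.1 (i0w w) (fun i => (s i).2) := by
      funext i
      show (Lv w.1.1 (i0w w) (fun i' => (s i').2) i + w.2 i) + w.2 i = _
      rw [add_assoc, CharTwo.add_self_eq_zero, add_zero]
    show (Lv w.1.1 (i0w w) (fun i => (G' (s, w) i).1) j,
          Lv w.1.1 (i0w w) (fun i => (G' (s, w) i).2 + w.2 i) j) = s j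
    rw [h1, h2, Lv_invol (hi₀1 w.1), Lv_invol (hi₀1 w.1)]
  have hGG' : ∀ t w, G' (Ginv t w, w) = t := by
    intro t w
    funext j
    have h1 : (fun i => (Ginv t w i).1) = Lv w.1.1 (i0w w) (fun i => (t i).1) := rfl
    have h2 : (fun i => (Ginv t w i).2)
        = Lv w.1.1 (i0w w) (fun i => (t i).2 + w.2 i) := rfl
    show (Lv w.1.1 (i0w w) (fun i => (Ginv t w i).1) j,
          Lv w.1.1 (i0w w) (fun i => (Ginv t w i).2) j + w.2 j) = t j
    rw [h1, h2, Lv_invol (hi₀1 w.1), Lv_invol (hi₀1 w.1)]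
    show ((t j).1, ((t j).2 + w.2 j) + w.2 j) = t j
    rw [add_assoc, CharTwo.add_self_eq_zero, add_zero]
  have hcond : ∀ s w t, G' (s, w) = t ↔ s = Ginv t w := by
    intro s w t
    constructor
    · rintro rfl; exact (hGG s w).symm
    · rintro rfl; exact hGG' t w
  -- the main pushforward identity over the structured sample space
  have MAIN : ∀ sk : Fin n → ZMod 2,
      pushforward G' (fun x => (∏ i, lpn n (2 ^ (k + 2) * δ) sk (x.1 i)) * ρ' x.2)
        = batchLPN n k p sk := by
    intro sk
    funext t
    unfold pushforward
    rw [Finset.sum_filter, Fintype.sum_prod_type, Finset.sum_comm]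
    have hstep : ∀ w, (∑ s : Fin k → (Fin n → ZMod 2) × ZMod 2,
        if G' (s, w) = t then (∏ i, lpn n (2 ^ (k + 2) * δ) sk (s i)) * ρ' w else 0)
          = (∏ i, lpn n (2 ^ (k + 2) * δ) sk (Ginv t w i)) * ρ' w := by
      intro w
      have : ∀ s, (G' (s, w) = t) = (s = Ginv t w) := fun s => propext (hcond s w t)
      simp_rw [this]
      rw [Finset.sum_ite_eq' Finset.univ (Ginv t w)
        (fun s => (∏ i, lpn n (2 ^ (k + 2) * δ) sk (s i)) * ρ' w)]
      simp
    rw [Finset.sum_congr rfl (fun w _ => hstep w)]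
    -- noise computation
    set f : Fin k → ZMod 2 := fun j => (t j).2 - dotProduct (t j).1 sk with hf
    have hnoise : ∀ w i, (Ginv t w i).2 - dotProduct (Ginv t w i).1 sk
        = Lv w.1.1 (i0w w) (f + w.2) i := by
      intro w i
      show Lv w.1.1 (i0w w) (fun j => (t j).2 + w.2 j) i
          - dotProduct (Lv w.1.1 (i0w w) (fun j => (t j).1) i) sk = _
      rw [CharTwo.sub_eq_add, Lv_dot]
      have hLadd := congrFun (Lv_add w.1.1 (i0w w) (fun j => (t j).2 + w.2 j)
        (fun j => dotProduct ((t j).1) sk)) i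
      simp only [Pi.add_apply] at hLadd
      rw [show ((fun j => (t j).2 + w.2 j) + fun j => dotProduct ((t j).1) sk)
          = f + w.2 by
        funext j
        simp only [Pi.add_apply, hf]
        rw [CharTwo.sub_eq_add]
        ring] at hLadd
      exact hLadd.symm
    have hprod : ∀ w, (∏ i, lpn n (2 ^ (k + 2) * δ) sk (Ginv t w i))
        = (1 / 2 ^ (n * k)) * B (1/2 - Δ) (Lv w.1.1 (i0w w) (f + w.2)) := by
      intro w
      unfold lpn
      rw [Finset.prod_mul_distrib, Finset.prod_const, Finset.card_univ, Fintype.card_fin]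
      congr 1
      · rw [div_pow, one_pow, ← pow_mul]
      · unfold B
        apply Finset.prod_congr rfl
        intro i _
        rw [hnoise w i]
    rw [Finset.sum_congr rfl (fun w _ => by rw [hprod w])]
    simp_rw [mul_assoc, ← Finset.mul_sum]
    unfold batchLPN
    congr 1
    rw [← KEY f]
    apply Finset.sum_congr rfl
    intro w _
    ring
  -- transport along an equivalence with Fin m
  let e := Fintype.equivFin ({S : Fin k → ZMod 2 // S ≠ 0} × (Fin k → ZMod 2))
  refine ⟨Fintype.card ({S : Fin k → ZMod 2 // S ≠ 0} × (Fin k → ZMod 2)),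
    fun j => ρ' (e.symm j), fun x => G' (x.1, e.symm x.2),
    ⟨fun j => hρ'nonneg _, ?_⟩, ?_⟩
  · rw [Equiv.sum_comp e.symm ρ']
    exact hρ'sum
  · intro sk
    rw [← MAIN sk]
    exact pushforward_precomp_equiv
      ((Equiv.refl (Fin k → (Fin n → ZMod 2) × ZMod 2)).prodCongr e.symm)
      G' (fun x => (∏ i, lpn n (2 ^ (k + 2) * δ) sk (x.1 i)) * ρ' x.2)
end

section
/- Fix k ∈ ℕ with k ≥ 2, and let B be the real (2^k − 1) × (2^k − 1) matrix with rows and columns indexed by the nonzero vectors of {0,1}^k, where B_{uv} = ⟨u,v⟩ mod 2 (viewed as a real number). Then BᵀB = 2^{k−2}·𝟙𝟙ᵀ + 2^{k−2}·I, where 𝟙 is the all-ones vector and I the identity matrix of dimension 2^k − 1. -/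
open Matrix

open Finset

noncomputable def chi (x : ZMod 2) : ℝ := if x = 1 then -1 else 1

lemma zmod2_cases : ∀ x : ZMod 2, x = 0 ∨ x = 1 := by decide

lemma two_zero : (1 + 1 : ZMod 2) = 0 := by decide

lemma chi_add_one (x : ZMod 2) : chi (x + 1) = - chi x := by
  rcases zmod2_cases x with h | h <;> subst h <;>
    simp [chi, two_zero]

lemma chi_mul (x y : ZMod 2) : chi x * chi y = chi (x + y) := by
  rcases zmod2_cases x with h | h <;> rcases zmod2_cases y with h' | h' <;>
    subst h <;> subst h' <;> simp [chi, two_zero]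

lemma ind_eq (x : ZMod 2) : (if x = 1 then (1:ℝ) else 0) = (1 - chi x)/2 := by
  rcases zmod2_cases x with h | h <;> subst h <;> norm_num [chi]

lemma char_sum {k : ℕ} {a : Fin k → ZMod 2} (ha : a ≠ 0) :
    ∑ w : Fin k → ZMod 2, chi (dotProduct w a) = 0 := by
  obtain ⟨i, hi⟩ := Function.ne_iff.mp ha
  have hi' : a i ≠ 0 := hi
  have hai : a i = 1 := by
    rcases zmod2_cases (a i) with h | h
    · exact absurd h hi'
    · exact h
  have key : ∑ w : Fin k → ZMod 2, chi (dotProduct w a)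
      = ∑ w : Fin k → ZMod 2, chi (dotProduct (w + Pi.single i 1) a) :=
    (Fintype.sum_equiv (Equiv.addRight (Pi.single i 1)) _ _ (fun w => rfl)).symm
  have h2 : ∀ w : Fin k → ZMod 2, dotProduct (w + Pi.single i 1) a
      = dotProduct w a + 1 := by
    intro w
    rw [add_dotProduct, single_dotProduct, hai, one_mul]
  simp only [h2, chi_add_one] at key
  rw [Finset.sum_neg_distrib] at key
  linarith

/-- The real `(2^k − 1) × (2^k − 1)` matrix indexed by nonzero vectors of `𝔽₂^k`,
with `B_{uv} = ⟨u,v⟩ mod 2`, viewed as a real number `0` or `1`. -/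
def Bmat (k : ℕ) : Matrix {v : Fin k → ZMod 2 // v ≠ 0} {v : Fin k → ZMod 2 // v ≠ 0} ℝ :=
  Matrix.of fun u v => if dotProduct u.1 v.1 = 1 then 1 else 0

/-- `BᵀB = 2^{k−2}·𝟙𝟙ᵀ + 2^{k−2}·I`. -/
theorem Bmat_transpose_mul_self (k : ℕ) (hk : 2 ≤ k) :
    (Bmat k)ᵀ * Bmat k =
      (2 : ℝ) ^ (k - 2) • Matrix.of (fun _ _ => (1 : ℝ)) + (2 : ℝ) ^ (k - 2) • 1 := by
  ext u v
  have hcard : (Fintype.card (Fin k → ZMod 2) : ℝ) = 2 ^ k := by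
    simp [Fintype.card_fun]
  have hpow : (2:ℝ) ^ k = 2 ^ (k-2) * 4 := by
    have h : k = (k - 2) + 2 := by omega
    conv_lhs => rw [h]
    rw [pow_add]; norm_num
  set F : (Fin k → ZMod 2) → ℝ := fun w =>
    (if dotProduct w u.1 = 1 then (1:ℝ) else 0) *
    (if dotProduct w v.1 = 1 then (1:ℝ) else 0) with hF
  have lhs_eq : ((Bmat k)ᵀ * Bmat k) u v = ∑ w : Fin k → ZMod 2, F w := by
    rw [Matrix.mul_apply]
    have h1 : ∑ w : {v : Fin k → ZMod 2 // v ≠ 0}, (Bmat k)ᵀ u w * Bmat k w v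
        = ∑ w ∈ Finset.univ.filter (fun w : Fin k → ZMod 2 => w ≠ 0), F w := by
      rw [Finset.sum_subtype (p := fun w : Fin k → ZMod 2 => w ≠ 0)
        (Finset.univ.filter fun w => w ≠ 0) (by intro x; simp)]
      rfl
    rw [h1, Finset.sum_filter_of_ne]
    intro x _ hx
    intro h0
    apply hx
    simp [hF, h0, zero_dotProduct]
  have hFval : ∀ w, F w = (1 - chi (dotProduct w u.1)) / 2 *
      ((1 - chi (dotProduct w v.1)) / 2) := by
    intro w; rw [hF]; simp only []; rw [ind_eq, ind_eq]
  have hexp : ∀ w : Fin k → ZMod 2, F w =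
      (1 - chi (dotProduct w u.1) - chi (dotProduct w v.1)
        + chi (dotProduct w (u.1 + v.1))) / 4 := by
    intro w
    rw [hFval w, dotProduct_add, ← chi_mul]
    ring
  have hsum : ∑ w : Fin k → ZMod 2, F w
      = ((2:ℝ)^k - 0 - 0 + ∑ w : Fin k → ZMod 2, chi (dotProduct w (u.1 + v.1)))/4 := by
    simp only [hexp]
    rw [← Finset.sum_div]
    rw [Finset.sum_add_distrib, Finset.sum_sub_distrib, Finset.sum_sub_distrib,
      char_sum u.2, char_sum v.2, Finset.sum_const, Finset.card_univ, nsmul_eq_mul, hcard]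
    ring
  rw [lhs_eq, hsum]
  simp only [Matrix.add_apply, Matrix.smul_apply, Matrix.of_apply, Matrix.one_apply,
    smul_eq_mul]
  by_cases huv : u = v
  · subst huv
    have : u.1 + u.1 = 0 := by
      ext i; exact CharTwo.add_self_eq_zero _
    rw [this]
    have : ∀ w : Fin k → ZMod 2, chi (dotProduct w 0) = 1 := by
      intro w; rw [dotProduct_zero]; simp [chi]
    simp only [this, Finset.sum_const, Finset.card_univ, nsmul_eq_mul, hcard]
    rw [if_true, hpow]; ring
  · have hne : u.1 + v.1 ≠ 0 := by
      intro h
      apply huv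
      apply Subtype.ext
      have : u.1 = -v.1 := eq_neg_of_add_eq_zero_left h
      rw [this]
      ext i; simp [ZMod.neg_eq_self_mod_two]
    rw [char_sum hne, if_neg huv, mul_zero, add_zero, hpow]
    ring
end

section
/- Fix k ∈ ℕ with k ≥ 1, and let q : 𝔽₂^k → ℝ be any function with q(z) ∈ [1/2 − 2^{−(k+3)}, 1/2 + 2^{−(k+3)}] for all z ∈ 𝔽₂^k. Then there exists a probability distribution μ on 𝔽₂^{k+1} such that for all z ∈ 𝔽₂^k, the probability under F = (F₀, F₁, …, F_k) ∼ μ that F₀ + z₁F₁ + ⋯ + z_kF_k = 1 (sum over 𝔽₂) equals q(z). -/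
namespace LinDist

noncomputable def e (x : ZMod 2) : ℝ := if x = 1 then -1 else 1

lemma e_zero : e 0 = 1 := by simp [e]
lemma e_one : e 1 = -1 := by simp [e]
lemma e_add (x y : ZMod 2) : e (x + y) = e x * e y := by
  rcases (by decide : ∀ t : ZMod 2, t = 0 ∨ t = 1) x with rfl | rfl <;> rcases (by decide : ∀ t : ZMod 2, t = 0 ∨ t = 1) y with rfl | rfl <;> norm_num [e, (by decide : (1:ZMod 2) + 1 = 0), (by decide : ¬ (2:ZMod 2) = 1)]
lemma e_sq (x : ZMod 2) : e x * e x = 1 := by rcases (by decide : ∀ t : ZMod 2, t = 0 ∨ t = 1) x with rfl | rfl <;> norm_num [e]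
lemma e_cases (x : ZMod 2) : e x = 1 ∨ e x = -1 := by rcases (by decide : ∀ t : ZMod 2, t = 0 ∨ t = 1) x with rfl | rfl <;> norm_num [e]

lemma char_sum {n : ℕ} (a : Fin n → ZMod 2) (ha : a ≠ 0) :
    ∑ f : Fin n → ZMod 2, e (∑ i, a i * f i) = 0 := by
  obtain ⟨j, hj⟩ : ∃ j, a j ≠ 0 := by
    by_contra h; push_neg at h; exact ha (funext fun i => h i)
  have haj : a j = 1 := by
    have h1 : ∀ x : ZMod 2, x ≠ 0 → x = 1 := by decide
    exact h1 _ hj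
  set σ : (Fin n → ZMod 2) → (Fin n → ZMod 2) :=
    fun f => Function.update f j (f j + 1) with hσdef
  have hσ : Function.Involutive σ := by
    intro f
    funext i
    rcases eq_or_ne i j with rfl | h
    · simp only [hσdef, Function.update_self]
      have h2 : ∀ x : ZMod 2, x + 1 + 1 = x := by decide
      exact h2 _
    · simp [hσdef, Function.update_of_ne h]
  have key : ∀ f : Fin n → ZMod 2,
      e (∑ i, a i * σ f i) = - e (∑ i, a i * f i) := by
    intro f
    have hupd : ∀ i, σ f i = f i + (if i = j then 1 else 0) := by
      intro i
      rcases eq_or_ne i j with rfl | h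
      · simp [hσdef, Function.update_self]
      · simp [hσdef, Function.update_of_ne h, h]
    have hsum : ∑ i, a i * σ f i = (∑ i, a i * f i) + 1 := by
      simp_rw [hupd, mul_add]
      rw [Finset.sum_add_distrib]
      congr 1
      simp [Finset.sum_ite_eq', haj]
    rw [hsum, e_add, e_one]
    ring
  have hperm := Equiv.sum_comp (hσ.toPerm)
      (fun f : Fin n → ZMod 2 => e (∑ i, a i * f i))
  simp only [Function.Involutive.coe_toPerm] at hperm
  simp_rw [key] at hperm
  rw [Finset.sum_neg_distrib] at hperm
  linarith

def s (k : ℕ) (z : Fin k → ZMod 2) (f : Fin (k+1) → ZMod 2) : ZMod 2 :=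
  f 0 + ∑ i : Fin k, z i * f i.succ

lemma s_eq (k : ℕ) (z : Fin k → ZMod 2) (f : Fin (k+1) → ZMod 2) :
    s k z f = ∑ i : Fin (k+1), (Fin.cons 1 z : Fin (k+1) → ZMod 2) i * f i := by
  rw [Fin.sum_univ_succ]
  simp [s]

lemma sum_e_s (k : ℕ) (z : Fin k → ZMod 2) :
    ∑ f : Fin (k+1) → ZMod 2, e (s k z f) = 0 := by
  simp_rw [s_eq]
  apply char_sum
  intro h
  have h0 := congrFun h 0
  simp at h0

lemma orth (k : ℕ) (z z' : Fin k → ZMod 2) :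
    ∑ f : Fin (k+1) → ZMod 2, e (s k z f) * e (s k z' f)
      = if z = z' then (2:ℝ)^(k+1) else 0 := by
  rcases eq_or_ne z z' with rfl | h
  · simp only [if_pos rfl, e_sq, Finset.sum_const, Finset.card_univ]
    simp [Fintype.card_fun]
  · rw [if_neg h]
    have hmul : ∀ f : Fin (k+1) → ZMod 2, e (s k z f) * e (s k z' f)
        = e (∑ i : Fin (k+1), ((Fin.cons 1 z : Fin (k+1) → ZMod 2) i + (Fin.cons 1 z' : Fin (k+1) → ZMod 2) i) * f i) := by
      intro f
      rw [← e_add, s_eq, s_eq, ← Finset.sum_add_distrib]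
      congr 1
      exact Finset.sum_congr rfl fun i _ => (add_mul _ _ _).symm
    simp_rw [hmul]
    apply char_sum
    intro hz
    apply h
    funext i
    have hi := congrFun hz i.succ
    simp only [Fin.cons_succ, Pi.zero_apply] at hi
    have h2 : ∀ x y : ZMod 2, x + y = 0 → x = y := by decide
    exact h2 _ _ hi

end LinDist

open LinDist in
/-- For any `q : 𝔽₂^k → [1/2 − 2^{−(k+3)}, 1/2 + 2^{−(k+3)}]`, there is a probability
distribution `μ` on `𝔽₂^{k+1}` such that for all `z ∈ 𝔽₂^k`, the probability under
`F = (F₀, …, F_k) ∼ μ` that `F₀ + z₁F₁ + ⋯ + z_kF_k = 1` (sum over `𝔽₂`) equals `q(z)`. -/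
theorem exists_linearizing_dist (k : ℕ) (hk : 1 ≤ k) (q : (Fin k → ZMod 2) → ℝ)
    (hq : ∀ z, q z ∈ Set.Icc (1 / 2 - 1 / 2 ^ (k + 3)) (1 / 2 + 1 / 2 ^ (k + 3) : ℝ)) :
    ∃ μ : (Fin (k + 1) → ZMod 2) → ℝ, IsProbDist μ ∧
      ∀ z : Fin k → ZMod 2,
        ∑ f ∈ Finset.univ.filter
            (fun f : Fin (k + 1) → ZMod 2 => f 0 + ∑ i : Fin k, z i * f i.succ = 1),
          μ f = q z := by
  classical
  set c : (Fin k → ZMod 2) → ℝ := fun z => 1 - 2 * q z with hc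
  have hP : (0:ℝ) < 2 ^ (k+2) := by positivity
  have hcbound : ∀ z, -(1 / 2^(k+2)) ≤ c z ∧ c z ≤ 1 / 2^(k+2) := by
    intro z
    obtain ⟨h1, h2⟩ := hq z
    have e3 : (1:ℝ) / 2 ^ (k+3) = (1 / 2^(k+2)) / 2 := by
      rw [pow_succ]; ring
    rw [e3] at h1 h2
    constructor <;> · simp only [hc]; linarith
  have hterm : ∀ (z : Fin k → ZMod 2) (f : Fin (k+1) → ZMod 2),
      -(1 / 2^(k+2)) ≤ c z * e (s k z f) := by
    intro z f
    obtain ⟨hl, hr⟩ := hcbound z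
    rcases e_cases (s k z f) with h | h <;> rw [h] <;> linarith
  set μ : (Fin (k+1) → ZMod 2) → ℝ :=
    fun f => (1 + ∑ z, c z * e (s k z f)) / 2^(k+1) with hμ
  have hcardk : (Finset.univ : Finset (Fin k → ZMod 2)).card = 2^k := by
    simp [Finset.card_univ, Fintype.card_fun]
  have hcard : (Finset.univ : Finset (Fin (k+1) → ZMod 2)).card = 2^(k+1) := by
    simp [Finset.card_univ, Fintype.card_fun]
  have hSlb : ∀ f, -(1/4 : ℝ) ≤ ∑ z, c z * e (s k z f) := by
    intro f
    have h1 : ∑ _z : Fin k → ZMod 2, (-(1 / 2^(k+2)) : ℝ)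
        ≤ ∑ z, c z * e (s k z f) :=
      Finset.sum_le_sum fun z _ => hterm z f
    have h2 : ∑ _z : Fin k → ZMod 2, (-(1 / 2^(k+2)) : ℝ) = -(1/4 : ℝ) := by
      rw [Finset.sum_const, hcardk, nsmul_eq_mul]
      have : (2:ℝ)^(k+2) = 2^k * 4 := by rw [pow_add]; norm_num
      rw [this]
      push_cast
      field_simp
    linarith
  have hnonneg : ∀ f, 0 ≤ μ f := by
    intro f
    have := hSlb f
    apply div_nonneg (by linarith) (by positivity)
  have hsum1 : ∑ f, μ f = 1 := by
    simp only [hμ]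
    rw [← Finset.sum_div, Finset.sum_add_distrib]
    have hA : ∑ _f : Fin (k+1) → ZMod 2, (1:ℝ) = 2^(k+1) := by
      rw [Finset.sum_const, hcard]; push_cast; ring
    have hB : ∑ f : Fin (k+1) → ZMod 2, ∑ z, c z * e (s k z f) = 0 := by
      rw [Finset.sum_comm]
      apply Finset.sum_eq_zero
      intro z _
      rw [← Finset.mul_sum, sum_e_s, mul_zero]
    rw [hA, hB, add_zero]
    field_simp
  refine ⟨μ, ⟨hnonneg, hsum1⟩, ?_⟩
  intro z
  have hT : ∑ f, μ f * e (s k z f) = c z := by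
    have hstep : ∀ f, μ f * e (s k z f)
        = (e (s k z f) + (∑ z', c z' * e (s k z' f)) * e (s k z f)) / 2^(k+1) := by
      intro f
      rw [hμ]
      field_simp
    simp_rw [hstep]
    rw [← Finset.sum_div, Finset.sum_add_distrib, sum_e_s, zero_add]
    have hB : ∑ f : Fin (k+1) → ZMod 2, (∑ z', c z' * e (s k z' f)) * e (s k z f)
        = c z * 2^(k+1) := by
      simp_rw [Finset.sum_mul]
      rw [Finset.sum_comm]
      have : ∀ z' : Fin k → ZMod 2,
          ∑ f : Fin (k+1) → ZMod 2, c z' * e (s k z' f) * e (s k z f)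
          = c z' * (if z' = z then (2:ℝ)^(k+1) else 0) := by
        intro z'
        simp_rw [mul_assoc]
        rw [← Finset.mul_sum, orth]
      simp_rw [this]
      simp [Finset.sum_ite_eq']
    rw [hB]
    field_simp
  have hite : ∀ f : Fin (k+1) → ZMod 2,
      (if s k z f = 1 then μ f else 0) = μ f * (1 - e (s k z f)) / 2 := by
    intro f
    have h01 : ∀ x : ZMod 2, x = 0 ∨ x = 1 := by decide
    rcases h01 (s k z f) with h | h <;> rw [h]
    · rw [if_neg (by decide), e_zero]; ring
    · rw [if_pos rfl, e_one]; ring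
  have hfilter : ∑ f ∈ Finset.univ.filter
      (fun f : Fin (k + 1) → ZMod 2 => f 0 + ∑ i : Fin k, z i * f i.succ = 1), μ f
      = ∑ f : Fin (k+1) → ZMod 2, (if s k z f = 1 then μ f else 0) := by
    rw [Finset.sum_filter]
    rfl
  rw [hfilter]
  simp_rw [hite]
  have : ∑ f : Fin (k+1) → ZMod 2, μ f * (1 - e (s k z f)) / 2
      = ((∑ f, μ f) - ∑ f, μ f * e (s k z f)) / 2 := by
    rw [← Finset.sum_div, ← Finset.sum_sub_distrib]
    congr 1
    apply Finset.sum_congr rfl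
    intro f _
    ring
  rw [this, hsum1, hT, hc]
  ring
end

section
/- Fix k ∈ ℕ with k ≥ 1, and let B be the real (2^k − 1) × (2^k − 1) matrix with rows and columns indexed by the nonzero vectors of {0,1}^k, where B_{uv} = ⟨u,v⟩ mod 2 (viewed as a real number). Then B is invertible and B^{-1}𝟙 = 2^{1−k}𝟙, where 𝟙 is the all-ones vector of dimension 2^k − 1. -/
open Matrix Finset


lemma card_dot_one {k : ℕ} (u : Fin k → ZMod 2) (hu : u ≠ 0) :
    2 * (univ.filter (fun w : Fin k → ZMod 2 => dotProduct u w = 1)).card = 2 ^ k := by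
  obtain ⟨i, hi⟩ := Function.ne_iff.mp hu
  have hui : u i = 1 := by
    have h : ∀ x : ZMod 2, x ≠ 0 → x = 1 := by decide
    exact h _ hi
  set e : Fin k → ZMod 2 := Pi.single i 1 with he
  have hde : ∀ w : Fin k → ZMod 2, dotProduct u (w + e) = dotProduct u w + 1 := by
    intro w
    rw [dotProduct_add, he, dotProduct_single, hui, mul_one]
  have hee : ∀ w : Fin k → ZMod 2, w + e + e = w := by
    intro w
    rw [add_assoc]
    have : e + e = 0 := by
      funext j
      have h : ∀ x : ZMod 2, x + x = 0 := by decide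
      exact h _
    rw [this, add_zero]
  have hcard : (univ.filter (fun w : Fin k → ZMod 2 => dotProduct u w = 1)).card
      = (univ.filter (fun w : Fin k → ZMod 2 => ¬ dotProduct u w = 1)).card := by
    apply Finset.card_bij' (fun w _ => w + e) (fun w _ => w + e)
    · intro w hw
      simp only [mem_filter, mem_univ, true_and] at hw ⊢
      rw [hde]
      rw [hw]
      decide
    · intro w hw
      simp only [mem_filter, mem_univ, true_and] at hw ⊢
      rw [hde]
      have h : ∀ x : ZMod 2, x ≠ 1 → x + 1 = 1 := by decide
      exact h _ hw
    · intro w _; exact hee w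
    · intro w _; exact hee w
  have hsplit := Finset.card_filter_add_card_filter_not
    (s := (univ : Finset (Fin k → ZMod 2)))
    (p := fun w => dotProduct u w = 1)
  have huniv : (univ : Finset (Fin k → ZMod 2)).card = 2 ^ k := by
    simp [Fintype.card_fun]
  omega

lemma card_dot_pair {k : ℕ} (u v : Fin k → ZMod 2) (hu : u ≠ 0) (hv : v ≠ 0) (huv : u ≠ v) :
    4 * (univ.filter (fun w : Fin k → ZMod 2 =>
      dotProduct u w = 1 ∧ dotProduct v w = 1)).card = 2 ^ k := by
  classical
  set P := fun w : Fin k → ZMod 2 => dotProduct u w = 1 with hP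
  set Q := fun w : Fin k → ZMod 2 => dotProduct v w = 1 with hQ
  have h1 : (univ.filter (fun w => P w ∧ Q w)).card
      + (univ.filter (fun w => P w ∧ ¬ Q w)).card = (univ.filter P).card := by
    rw [← Finset.filter_filter, ← Finset.filter_filter]
    exact Finset.card_filter_add_card_filter_not (p := Q)
  have h2 : (univ.filter (fun w => P w ∧ Q w)).card
      + (univ.filter (fun w => ¬ P w ∧ Q w)).card = (univ.filter Q).card := by
    have := Finset.card_filter_add_card_filter_not
      (s := univ.filter Q) (p := P)
    rw [Finset.filter_filter, Finset.filter_filter] at this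
    rw [← this]
    congr 2
    · ext w; simp [and_comm]
    · ext w; simp [and_comm]
  have huv0 : u + v ≠ 0 := by
    intro h
    apply huv
    have : u = u + v + v := by
      funext j
      have h2 : ∀ x y : ZMod 2, x = x + y + y := by decide
      exact h2 _ _
    rw [h, zero_add] at this
    exact this
  have h3 : (univ.filter (fun w => P w ∧ ¬ Q w)).card
      + (univ.filter (fun w => ¬ P w ∧ Q w)).card
      = (univ.filter (fun w : Fin k → ZMod 2 => dotProduct (u + v) w = 1)).card := by
    have key : ∀ w : Fin k → ZMod 2, dotProduct (u + v) w = 1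
        ↔ ((P w ∧ ¬ Q w) ∨ (¬ P w ∧ Q w)) := by
      intro w
      show dotProduct (u + v) w = 1
        ↔ ((dotProduct u w = 1 ∧ ¬ dotProduct v w = 1)
          ∨ (¬ dotProduct u w = 1 ∧ dotProduct v w = 1))
      rw [add_dotProduct]
      generalize dotProduct u w = a
      generalize dotProduct v w = b
      revert a b; decide
    rw [Finset.filter_congr (fun w _ => key w), Finset.filter_or]
    rw [Finset.card_union_of_disjoint]
    rw [Finset.disjoint_filter]
    tauto
  have c1 := card_dot_one u hu
  have c2 := card_dot_one v hv
  have c3 := card_dot_one (u + v) huv0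
  have goal : (univ.filter (fun w => P w ∧ Q w)).card
      = (univ.filter (fun w : Fin k → ZMod 2 =>
        dotProduct u w = 1 ∧ dotProduct v w = 1)).card := rfl
  have gP : (univ.filter P).card
      = (univ.filter (fun w : Fin k → ZMod 2 => dotProduct u w = 1)).card := rfl
  have gQ : (univ.filter Q).card
      = (univ.filter (fun w : Fin k → ZMod 2 => dotProduct v w = 1)).card := rfl
  omega

lemma sum_subtype_ne_zero {k : ℕ} (f : (Fin k → ZMod 2) → ℝ) (hf : f 0 = 0) :
    ∑ w : {v : Fin k → ZMod 2 // v ≠ 0}, f w.1 = ∑ w : Fin k → ZMod 2, f w := by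
  rw [← Finset.sum_subtype (univ.filter (fun x : Fin k → ZMod 2 => x ≠ 0)) (by simp) f]
  rw [← Finset.sum_filter_add_sum_filter_not univ (fun x : Fin k → ZMod 2 => x ≠ 0) f]
  have h : univ.filter (fun x : Fin k → ZMod 2 => ¬ x ≠ 0) = {0} := by
    ext x; simp
  rw [h, Finset.sum_singleton, hf, add_zero]

/-- `B` is invertible and `B⁻¹𝟙 = 2^{1−k}𝟙`. -/
theorem Bmat_inv_mulVec_one (k : ℕ) (hk : 1 ≤ k) :
    IsUnit (Bmat k) ∧
      (Bmat k)⁻¹.mulVec (fun _ => 1) = fun _ => (2 : ℝ) ^ ((1 : ℤ) - (k : ℤ)) := by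
  classical
  set C : Matrix {v : Fin k → ZMod 2 // v ≠ 0} {v : Fin k → ZMod 2 // v ≠ 0} ℝ :=
    (2:ℝ)^((2:ℤ)-(k:ℤ)) • Bmat k - (2:ℝ)^((1:ℤ)-(k:ℤ)) • Matrix.of (fun _ _ => (1:ℝ)) with hCdef
  have hx : (2:ℝ)^((k:ℤ)) ≠ 0 := by positivity
  have hpow : ((2:ℕ)^k : ℝ) = (2:ℝ)^((k:ℤ)) := by
    push_cast
    exact (zpow_natCast 2 k).symm
  -- row sums of B (as a real number)
  have hS1 : ∀ u : {v : Fin k → ZMod 2 // v ≠ 0},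
      ∑ w : {v : Fin k → ZMod 2 // v ≠ 0}, Bmat k u w = (2:ℝ)^((k:ℤ)) / 2 := by
    intro u
    have := sum_subtype_ne_zero
      (fun w => if dotProduct u.1 w = 1 then (1:ℝ) else 0) (by simp)
    calc ∑ w : {v : Fin k → ZMod 2 // v ≠ 0}, Bmat k u w
        = ∑ w : Fin k → ZMod 2, (if dotProduct u.1 w = 1 then (1:ℝ) else 0) := this
      _ = ((univ.filter (fun w : Fin k → ZMod 2 => dotProduct u.1 w = 1)).card : ℝ) := by
          rw [Finset.sum_boole]
      _ = (2:ℝ)^((k:ℤ)) / 2 := by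
          have hc := card_dot_one u.1 u.2
          have : 2 * ((univ.filter (fun w : Fin k → ZMod 2 =>
              dotProduct u.1 w = 1)).card : ℝ) = (2:ℝ)^((k:ℤ)) := by
            rw [← hpow]; exact_mod_cast congrArg (Nat.cast : ℕ → ℝ) hc
          linarith
  -- sums of products of entries
  have hS2 : ∀ u v : {v : Fin k → ZMod 2 // v ≠ 0},
      ∑ w : {v : Fin k → ZMod 2 // v ≠ 0}, Bmat k u w * Bmat k w v
      = if u = v then (2:ℝ)^((k:ℤ)) / 2 else (2:ℝ)^((k:ℤ)) / 4 := by
    intro u v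
    have step1 : ∑ w : {v : Fin k → ZMod 2 // v ≠ 0}, Bmat k u w * Bmat k w v
        = ∑ w : Fin k → ZMod 2, (if dotProduct u.1 w = 1 ∧ dotProduct v.1 w = 1
            then (1:ℝ) else 0) := by
      rw [← sum_subtype_ne_zero (fun w => if dotProduct u.1 w = 1 ∧
        dotProduct v.1 w = 1 then (1:ℝ) else 0) (by simp)]
      apply Finset.sum_congr rfl
      intro w _
      show (if dotProduct u.1 w.1 = 1 then (1:ℝ) else 0)
          * (if dotProduct w.1 v.1 = 1 then (1:ℝ) else 0) = _
      rw [dotProduct_comm w.1 v.1]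
      split_ifs with h1 h2 h3 <;> simp_all
    rw [step1, Finset.sum_boole]
    by_cases huv : u = v
    · subst huv
      simp only [and_self, if_pos rfl, eq_self_iff_true, if_true]
      have hc := card_dot_one u.1 u.2
      have : 2 * ((univ.filter (fun w : Fin k → ZMod 2 =>
          dotProduct u.1 w = 1)).card : ℝ) = (2:ℝ)^((k:ℤ)) := by
        rw [← hpow]; exact_mod_cast congrArg (Nat.cast : ℕ → ℝ) hc
      linarith
    · rw [if_neg huv]
      have hne : u.1 ≠ v.1 := fun h => huv (Subtype.ext h)
      have hc := card_dot_pair u.1 v.1 u.2 v.2 hne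
      have : 4 * ((univ.filter (fun w : Fin k → ZMod 2 =>
          dotProduct u.1 w = 1 ∧ dotProduct v.1 w = 1)).card : ℝ)
          = (2:ℝ)^((k:ℤ)) := by
        rw [← hpow]; exact_mod_cast congrArg (Nat.cast : ℕ → ℝ) hc
      linarith
  -- B * C = 1
  have hBC : Bmat k * C = 1 := by
    ext u v
    rw [Matrix.mul_apply, Matrix.one_apply]
    have expand : ∀ w : {v : Fin k → ZMod 2 // v ≠ 0},
        Bmat k u w * C w v = (2:ℝ)^((2:ℤ)-(k:ℤ)) * (Bmat k u w * Bmat k w v)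
          - (2:ℝ)^((1:ℤ)-(k:ℤ)) * Bmat k u w := by
      intro w
      simp only [hCdef, Matrix.sub_apply, Matrix.smul_apply, Matrix.of_apply, smul_eq_mul,
        mul_one]
      ring
    rw [Finset.sum_congr rfl (fun w _ => expand w), Finset.sum_sub_distrib,
      ← Finset.mul_sum, ← Finset.mul_sum, hS1, hS2]
    have h2 : (2:ℝ)^((2:ℤ)-(k:ℤ)) = 4 / (2:ℝ)^((k:ℤ)) := by
      rw [zpow_sub₀ (by norm_num)]; norm_num
    have h1 : (2:ℝ)^((1:ℤ)-(k:ℤ)) = 2 / (2:ℝ)^((k:ℤ)) := by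
      rw [zpow_sub₀ (by norm_num)]; norm_num
    by_cases huv : u = v
    · rw [if_pos huv, if_pos huv, h1, h2]
      field_simp
      ring
    · rw [if_neg huv, if_neg huv, h1, h2]
      field_simp
      ring
  have hunit : IsUnit (Bmat k) := IsUnit.of_mul_eq_one _ hBC
  have hinv : (Bmat k)⁻¹ = C := Matrix.inv_eq_right_inv hBC
  refine ⟨hunit, ?_⟩
  rw [hinv]
  funext u
  rw [Matrix.mulVec, dotProduct]
  simp only [mul_one]
  have expand : ∀ w : {v : Fin k → ZMod 2 // v ≠ 0},
      C u w = (2:ℝ)^((2:ℤ)-(k:ℤ)) * Bmat k u w - (2:ℝ)^((1:ℤ)-(k:ℤ)) := by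
    intro w
    simp only [hCdef, Matrix.sub_apply, Matrix.smul_apply, Matrix.of_apply, smul_eq_mul, mul_one]
  rw [Finset.sum_congr rfl (fun w _ => expand w), Finset.sum_sub_distrib, ← Finset.mul_sum,
    Finset.sum_const, hS1]
  have hcard : (Fintype.card {v : Fin k → ZMod 2 // v ≠ 0} : ℝ) = (2:ℝ)^((k:ℤ)) - 1 := by
    have hn : Fintype.card {v : Fin k → ZMod 2 // v ≠ 0} = 2 ^ k - 1 := by
      have : Fintype.card {v : Fin k → ZMod 2 // v ≠ 0}
          = Fintype.card {v : Fin k → ZMod 2 // ¬ v = 0} := rfl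
      rw [this, Fintype.card_subtype_compl, Fintype.card_subtype_eq]
      simp [Fintype.card_fun]
    rw [hn]
    have h1 : (1:ℕ) ≤ 2 ^ k := Nat.one_le_two_pow
    push_cast [h1]
    rw [← hpow]; push_cast; ring
  rw [Finset.card_univ, nsmul_eq_mul, hcard]
  have h2 : (2:ℝ)^((2:ℤ)-(k:ℤ)) = 4 / (2:ℝ)^((k:ℤ)) := by
    rw [zpow_sub₀ (by norm_num)]; norm_num
  have h1 : (2:ℝ)^((1:ℤ)-(k:ℤ)) = 2 / (2:ℝ)^((k:ℤ)) := by
    rw [zpow_sub₀ (by norm_num)]; norm_num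
  rw [h1, h2]
  field_simp
  ring
end

section
/- Fix n ∈ ℕ and sk ∈ 𝔽₂ⁿ. Let a be uniformly distributed on 𝔽₂ⁿ, let e be an 𝔽₂-valued random variable, and let (α, β) be a random pair taking values in 𝔽₂ × 𝔽₂ⁿ, such that a, e, and (α, β) satisfy: a is independent of (e, α, β). Define y := ⟨a, sk⟩ + e, a' := a + β, and y' := y + α (all operations over 𝔽₂ / 𝔽₂ⁿ). Then a' is uniformly distributed on 𝔽₂ⁿ and is independent of y' − ⟨a', sk⟩; moreover y' − ⟨a', sk⟩ = e + α + ⟨β, sk⟩. In other words, the joint distribution of (a', y' − ⟨a', sk⟩) is the product of the uniform distribution on 𝔽₂ⁿ and the distribution of e + α + ⟨β, sk⟩. -/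
lemma aux_add_add_cancel (n : ℕ) (x y : Fin n → ZMod 2) : x + y + y = x := by
  funext i
  show x i + y i + y i = x i
  rw [add_assoc, CharTwo.add_self_eq_zero, add_zero]

lemma aux_key (n : ℕ) (sk : Fin n → ZMod 2) :
    ∀ (a : Fin n → ZMod 2) (e α : ZMod 2) (β : Fin n → ZMod 2),
        (dotProduct a sk + e + α) - dotProduct (a + β) sk
          = e + α + dotProduct β sk := by
  intro a e α β
  rw [add_dotProduct, sub_eq_add_neg, CharTwo.neg_eq]
  ring_nf
  rw [mul_two, CharTwo.add_self_eq_zero, zero_add]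

/-- Adding affine-in-`sk` noise. Let `a` be uniform on `𝔽₂ⁿ`, independent of the triple
`(e, α, β) ∼ ν` (with arbitrary joint law `ν`). Set `y := ⟨a,sk⟩ + e`, `a' := a + β`,
`y' := y + α`. Then `y' − ⟨a',sk⟩ = e + α + ⟨β,sk⟩` identically, and the joint law of
`(a', y' − ⟨a',sk⟩)` is the product of the uniform distribution on `𝔽₂ⁿ` with the law
of `e + α + ⟨β,sk⟩`. -/
theorem affine_noise_resampling (n : ℕ) (sk : Fin n → ZMod 2)
    (ν : (ZMod 2 × ZMod 2 × (Fin n → ZMod 2)) → ℝ) (hν : IsProbDist ν) :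
    (∀ (a : Fin n → ZMod 2) (e α : ZMod 2) (β : Fin n → ZMod 2),
        (dotProduct a sk + e + α) - dotProduct (a + β) sk
          = e + α + dotProduct β sk) ∧
    pushforward
        (fun w : (Fin n → ZMod 2) × (ZMod 2 × ZMod 2 × (Fin n → ZMod 2)) =>
          (w.1 + w.2.2.2,
            (dotProduct w.1 sk + w.2.1 + w.2.2.1)
              - dotProduct (w.1 + w.2.2.2) sk))
        (fun w => (1 / 2 ^ n) * ν w.2)
      = fun s : (Fin n → ZMod 2) × ZMod 2 =>
          (1 / 2 ^ n) *
            pushforward (fun w : ZMod 2 × ZMod 2 × (Fin n → ZMod 2) =>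
              w.1 + w.2.1 + dotProduct w.2.2 sk) ν s.2 := by
  refine ⟨aux_key n sk, ?_⟩
  funext s
  unfold pushforward
  rw [Finset.mul_sum]
  refine Finset.sum_nbij' (fun w => w.2) (fun t => (s.1 + t.2.2, t)) ?_ ?_ ?_ ?_ ?_
  · intro w hw
    simp only [Finset.mem_filter, Finset.mem_univ, true_and, Prod.ext_iff] at hw ⊢
    rw [← hw.2, aux_key n sk]
  · intro t ht
    simp only [Finset.mem_filter, Finset.mem_univ, true_and, Prod.ext_iff] at ht ⊢
    refine ⟨aux_add_add_cancel n s.1 t.2.2, ?_⟩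
    rw [aux_key n sk, ht]
  · intro w hw
    simp only [Finset.mem_filter, Finset.mem_univ, true_and, Prod.ext_iff] at hw
    have h2 : s.1 + w.2.2.2 = w.1 := by
      rw [← hw.1]; exact aux_add_add_cancel n w.1 w.2.2.2
    exact Prod.ext h2 rfl
  · intro t _
    rfl
  · intro w _
    rfl
end
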